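/- Let U ∈ R^{n×m} have distinct unit columns positively spanning R^n and let U = S_1 ∪ ... ∪ S_d be its unique partition into irreducible sets. Then dim P_scc(U) = m − d. In particular, if U is irreducible (d = 1, i.e., U has no separator flats), then dim P_scc(U) = m − 1, so P_scc(U) is full dimensional in the hyperplane {x : Σ x_i = 1}. -/

import Mathlib

open MeasureTheory Module
open scoped RealInnerProductSpace Pointwise

def IsBasisIndex {n m : ℕ} (U : Fin m → EuclideanSpace ℝ (Fin n)) (I : Finset (Fin m)) : Prop :=
  I.card = n ∧ Submodule.span ℝ (U '' ↑I) = ⊤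

noncomputable def matroidPolytope {n m : ℕ} (U : Fin m → EuclideanSpace ℝ (Fin n)) :
    Set (Fin m → ℝ) :=
  convexHull ℝ {x | ∃ I : Finset (Fin m), IsBasisIndex U I ∧
    x = fun j => if j ∈ I then (1 : ℝ) else 0}

def PosSpanning {n m : ℕ} (U : Fin m → EuclideanSpace ℝ (Fin n)) : Prop :=
  ∀ x : EuclideanSpace ℝ (Fin n),
    ∃ c : Fin m → ℝ, (∀ i, 0 ≤ c i) ∧ x = ∑ i, c i • U i

/-- `T` is irreducible: it admits no separator, i.e. no nonempty proper subset `S ⊆ T` with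
`span S ∩ span (T∖S) = {0}`. -/
def IrreducibleIdx {n m : ℕ} (U : Fin m → EuclideanSpace ℝ (Fin n)) (T : Finset (Fin m)) :
    Prop :=
  ∀ S : Finset (Fin m), S ⊆ T → S.Nonempty → S ≠ T →
    ¬ Disjoint (Submodule.span ℝ (U '' ↑S)) (Submodule.span ℝ (U '' ↑(T \ S)))

namespace Stmt18
variable {n m : ℕ} (U : Fin m → EuclideanSpace ℝ (Fin n))

def Indep (K : Finset (Fin m)) : Prop :=
  LinearIndependent ℝ (fun i : (K : Set (Fin m)) => U i)

def Dep (K : Finset (Fin m)) : Prop :=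
  ∃ c : Fin m → ℝ, (∀ i, i ∉ K → c i = 0) ∧ (∃ i, c i ≠ 0) ∧ ∑ i, c i • U i = 0

lemma sum_restrict {K : Finset (Fin m)} {c : Fin m → ℝ} (hc : ∀ i, i ∉ K → c i = 0) :
    ∑ i, c i • U i = ∑ i : (K : Set (Fin m)), c i • U i := by
  rw [show (∑ i : (K : Set (Fin m)), c i • U i) = ∑ i ∈ K, c i • U i from
    Finset.sum_coe_sort K (fun i => c i • U i)]
  exact (Finset.sum_subset (K.subset_univ) (by intro i _ hi; rw [hc i hi, zero_smul])).symm

lemma indep_iff_not_dep {K : Finset (Fin m)} : Indep U K ↔ ¬ Dep U K := by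
  constructor
  · rintro h ⟨c, hc0, ⟨i0, hi0⟩, hsum⟩
    rw [sum_restrict U hc0] at hsum
    have := Fintype.linearIndependent_iff.mp h (fun i => c i) hsum
    by_cases hiK : i0 ∈ K
    · exact hi0 (this ⟨i0, hiK⟩)
    · exact hi0 (hc0 i0 hiK)
  · intro h
    by_contra hli
    obtain ⟨g, hg0, i0, hi0⟩ := Fintype.not_linearIndependent_iff.mp hli
    classical
    refine h ⟨fun i => if h : i ∈ K then g ⟨i, h⟩ else 0, fun i hi => dif_neg hi,
      ⟨i0, by simp [i0.2, hi0]⟩, ?_⟩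
    rw [sum_restrict U (c := fun i => if h : i ∈ K then g ⟨i, h⟩ else 0)
      (fun i hi => dif_neg hi)]
    · rw [← hg0]
      exact Finset.sum_congr rfl (by intro i _; simp [i.2])

lemma dep_mono {K K' : Finset (Fin m)} (h : Dep U K) (hKK' : K ⊆ K') : Dep U K' := by
  obtain ⟨c, hc0, hne, hsum⟩ := h
  exact ⟨c, fun i hi => hc0 i (fun h' => hi (hKK' h')), hne, hsum⟩

lemma card_of_indep_span {C : Finset (Fin m)} (hC : Indep U C)
    (hsp : Submodule.span ℝ (U '' ↑C) = ⊤) : C.card = n := by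
  have hr : Set.range (fun i : (C : Set (Fin m)) => U i) = U '' ↑C :=
    (Set.image_eq_range U ↑C).symm
  let b : Basis (C : Set (Fin m)) ℝ (EuclideanSpace ℝ (Fin n)) :=
    Basis.mk hC (by rw [hr, hsp])
  have h2 := Module.finrank_eq_card_basis b
  rw [finrank_euclideanSpace_fin] at h2
  simpa using h2.symm

lemma extend_step (htop : Submodule.span ℝ (Set.range U) = ⊤) {C : Finset (Fin m)}
    (hC : Indep U C) (hne : Submodule.span ℝ (U '' ↑C) ≠ ⊤) :
    ∃ i, i ∉ C ∧ Indep U (insert i C) := by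
  have hex : ∃ i, U i ∉ Submodule.span ℝ (U '' ↑C) := by
    by_contra h
    push_neg at h
    apply hne
    rw [← top_le_iff, ← htop]
    exact Submodule.span_le.mpr (by rintro x ⟨i, rfl⟩; exact h i)
  obtain ⟨i, hi⟩ := hex
  have hiC : i ∉ C := fun h => hi (Submodule.subset_span ⟨i, h, rfl⟩)
  refine ⟨i, hiC, ?_⟩
  have h2 := (linearIndepOn_insert (f := U) (a := i) (s := (C : Set (Fin m)))
    (by exact_mod_cast hiC)).mpr ⟨hC, hi⟩
  unfold Indep
  rw [Finset.coe_insert]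
  exact h2

lemma indep_empty : Indep U (∅ : Finset (Fin m)) := by
  unfold Indep; rw [Finset.coe_empty]; exact linearIndependent_empty_type

lemma exists_basis_extend (htop : Submodule.span ℝ (Set.range U) = ⊤) :
    ∀ (k : ℕ) (C : Finset (Fin m)), m - C.card ≤ k → Indep U C →
    ∃ B, C ⊆ B ∧ IsBasisIndex U B ∧ Indep U B := by
  intro k
  induction k with
  | zero =>
    intro C hk hC
    have hcard : C = Finset.univ := by
      apply Finset.eq_univ_of_card
      have := C.card_le_univ
      simp only [Fintype.card_fin] at this ⊢
      omega
    have hsp : Submodule.span ℝ (U '' ↑C) = ⊤ := by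
      rw [hcard, Finset.coe_univ, Set.image_univ, htop]
    exact ⟨C, subset_rfl, ⟨card_of_indep_span U hC hsp, hsp⟩, hC⟩
  | succ k ih =>
    intro C hk hC
    by_cases hsp : Submodule.span ℝ (U '' ↑C) = ⊤
    · exact ⟨C, subset_rfl, ⟨card_of_indep_span U hC hsp, hsp⟩, hC⟩
    · obtain ⟨i, hiC, hins⟩ := extend_step U htop hC hsp
      obtain ⟨B, hCB, h1, h2⟩ := ih (insert i C)
        (by
          rw [Finset.card_insert_of_notMem hiC]
          have := C.card_le_univ
          simp only [Fintype.card_fin] at this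
          have hlt : C.card < m := by
            rcases lt_or_eq_of_le this with h | h
            · exact h
            · exfalso
              apply hsp
              have : C = Finset.univ := Finset.eq_univ_of_card C (by simpa using h)
              rw [this, Finset.coe_univ, Set.image_univ, htop]
          omega) hins
      exact ⟨B, (Finset.subset_insert i C).trans hCB, h1, h2⟩

lemma indep_mono {K C : Finset (Fin m)} (hCK : C ⊆ K) (hK : Indep U K) : Indep U C := by
  rw [indep_iff_not_dep] at hK ⊢
  exact fun h => hK (dep_mono U h hCK)

lemma mem_span_image_rep (hinj : Function.Injective U) {C : Finset (Fin m)}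
    {x : EuclideanSpace ℝ (Fin n)} (hx : x ∈ Submodule.span ℝ (U '' ↑C)) :
    ∃ a : Fin m → ℝ, (∀ i, i ∉ C → a i = 0) ∧ x = ∑ i, a i • U i := by
  classical
  rw [show U '' ↑C = ↑(C.image U) from (Finset.coe_image).symm] at hx
  obtain ⟨f, -, hf⟩ := Submodule.mem_span_finset.mp hx
  refine ⟨fun i => if i ∈ C then f (U i) else 0, fun i hi => if_neg hi, ?_⟩
  have h1 : ∑ i, (if i ∈ C then f (U i) else 0) • U i
      = ∑ i ∈ C, f (U i) • U i := by
    rw [← Finset.sum_subset (C.subset_univ)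
      (by intro i _ hi; rw [if_neg hi, zero_smul])]
    exact Finset.sum_congr rfl (by intro i hi; rw [if_pos hi])
  rw [Finset.sum_image (fun i hi j hj h => hinj h)] at hf
  show x = ∑ i, (if i ∈ C then f (U i) else 0) • U i
  rw [h1, hf]

lemma disjoint_span_of_indep_union (hinj : Function.Injective U) {I₁ I₂ : Finset (Fin m)}
    (hd : Disjoint I₁ I₂) (h : Indep U (I₁ ∪ I₂)) :
    Disjoint (Submodule.span ℝ (U '' ↑I₁)) (Submodule.span ℝ (U '' ↑I₂)) := by
  rw [Submodule.disjoint_def]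
  intro x hx1 hx2
  obtain ⟨a, ha0, hax⟩ := mem_span_image_rep U hinj hx1
  obtain ⟨b, hb0, hbx⟩ := mem_span_image_rep U hinj hx2
  have hdep : ∑ i, (a i - b i) • U i = 0 := by
    simp only [sub_smul, Finset.sum_sub_distrib, ← hax, ← hbx, sub_self]
  have hab : ∀ i, a i = b i := by
    by_contra hc
    push_neg at hc
    obtain ⟨i0, hi0⟩ := hc
    have : Dep U (I₁ ∪ I₂) := ⟨fun i => a i - b i,
      fun i hi => by
        rw [Finset.mem_union] at hi
        push_neg at hi
        show a i - b i = 0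
        rw [ha0 i hi.1, hb0 i hi.2, sub_zero],
      ⟨i0, sub_ne_zero_of_ne hi0⟩, hdep⟩
    exact (indep_iff_not_dep U).mp h this
  have hz : ∀ i, a i = 0 := by
    intro i
    by_cases h1 : i ∈ I₁
    · have h2 : i ∉ I₂ := fun h2 => (Finset.disjoint_left.mp hd) h1 h2
      rw [hab i, hb0 i h2]
    · exact ha0 i h1
  rw [hax]
  simp [hz]

lemma exists_min_dep {K : Finset (Fin m)} (hK : ¬ Indep U K) :
    ∃ C, C ⊆ K ∧ (¬ Indep U C) ∧ (∃ c : Fin m → ℝ, (∀ i, c i ≠ 0 ↔ i ∈ C) ∧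
      ∑ i, c i • U i = 0) ∧ ∀ C' ⊂ C, Indep U C' := by
  classical
  let D := K.powerset.filter (fun C => ¬ Indep U C)
  have hKD : K ∈ D := Finset.mem_filter.mpr ⟨Finset.mem_powerset_self K, hK⟩
  obtain ⟨C, hCD, hCmin⟩ := Finset.exists_min_image D Finset.card ⟨K, hKD⟩
  obtain ⟨hCK, hCni⟩ := Finset.mem_filter.mp hCD
  rw [Finset.mem_powerset] at hCK
  have hproper : ∀ C' ⊂ C, Indep U C' := by
    intro C' hC'
    by_contra hni
    have : C' ∈ D := Finset.mem_filter.mpr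
      ⟨Finset.mem_powerset.mpr (hC'.subset.trans hCK), hni⟩
    have := hCmin C' this
    have := Finset.card_lt_card hC'
    omega
  have hdep : Dep U C := by
    by_contra hd
    exact hCni ((indep_iff_not_dep U).mpr hd)
  obtain ⟨c, hc0, ⟨i0, hi0⟩, hsum⟩ := hdep
  -- support of c equals C
  have hsuppC : ∀ i, c i ≠ 0 → i ∈ C := by
    intro i hi
    by_contra h
    exact hi (hc0 i h)
  set Cs := C.filter (fun i => c i ≠ 0) with hCs
  have hCsC : Cs ⊆ C := Finset.filter_subset _ _
  have hCsdep : Dep U Cs := ⟨c, fun i hi => by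
      by_contra h
      exact hi (Finset.mem_filter.mpr ⟨hsuppC i h, h⟩), ⟨i0, hi0⟩, hsum⟩
  have hCsEq : Cs = C := by
    by_contra hne
    have hss : Cs ⊂ C := Finset.ssubset_iff_subset_ne.mpr ⟨hCsC, hne⟩
    exact (indep_iff_not_dep U).mp (hproper Cs hss) hCsdep
  refine ⟨C, hCK, hCni, ⟨c, ?_, hsum⟩, hproper⟩
  intro i
  constructor
  · intro hi
    exact hsuppC i hi
  · intro hi
    rw [← hCsEq] at hi
    exact (Finset.mem_filter.mp hi).2

lemma exchange (htop : Submodule.span ℝ (Set.range U) = ⊤) {C : Finset (Fin m)}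
    (c : Fin m → ℝ) (hsupp : ∀ i, c i ≠ 0 ↔ i ∈ C) (hsum : ∑ i, c i • U i = 0)
    (hmin : ∀ C' ⊂ C, Indep U C') {e f : Fin m} (he : e ∈ C) (hf : f ∈ C) (hef : e ≠ f) :
    ∃ B : Finset (Fin m), IsBasisIndex U B ∧ e ∈ B ∧ f ∉ B ∧
      IsBasisIndex U (insert f (B.erase e)) := by
  classical
  have hCf : Indep U (C.erase f) := hmin _ (Finset.erase_ssubset hf)
  obtain ⟨B, hsub, hBbasis, hBindep⟩ :=
    exists_basis_extend U htop m (C.erase f) (Nat.sub_le _ _) hCf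
  have heB : e ∈ B := hsub (Finset.mem_erase.mpr ⟨hef, he⟩)
  have hfB : f ∉ B := by
    intro hfB
    have hCB : C ⊆ B := by
      conv_lhs => rw [← Finset.insert_erase hf]
      exact Finset.insert_subset hfB hsub
    have : Dep U B := dep_mono U
      ⟨c, fun i hi => by
        by_contra h
        exact hi ((hsupp i).mp h), ⟨e, (hsupp e).mpr he⟩, hsum⟩ hCB
    exact (indep_iff_not_dep U).mp hBindep this
  have hce : c e ≠ 0 := (hsupp e).mpr he
  have hfBe : f ∉ B.erase e := fun h => hfB (Finset.mem_of_mem_erase h)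
  refine ⟨B, hBbasis, heB, hfB, ?_, ?_⟩
  · have hc1 : B.card = n := hBbasis.1
    have h1 : 1 ≤ B.card := Finset.card_pos.mpr ⟨e, heB⟩
    rw [Finset.card_insert_of_notMem hfBe, Finset.card_erase_of_mem heB]
    omega
  · rw [← top_le_iff, ← hBbasis.2]
    apply Submodule.span_le.mpr
    rintro x ⟨i, hiB, rfl⟩
    rw [Finset.mem_coe] at hiB
    by_cases hie : i = e
    · subst hie
      have hsum' : c i • U i = - ∑ k ∈ Finset.univ.erase i, c k • U k := by
        have h := Finset.sum_erase_add Finset.univ (fun k => c k • U k) (Finset.mem_univ i)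
        rw [hsum] at h
        exact eq_neg_of_add_eq_zero_right h
      have hmem : ∀ k ∈ Finset.univ.erase i, c k • U k ∈
          Submodule.span ℝ (U '' ↑(insert f (B.erase i))) := by
        intro k hk
        rcases eq_or_ne (c k) 0 with h0 | h0
        · rw [h0, zero_smul]; exact zero_mem _
        · have hkC : k ∈ C := (hsupp k).mp h0
          have hke : k ≠ i := (Finset.mem_erase.mp hk).1
          apply Submodule.smul_mem
          apply Submodule.subset_span
          refine ⟨k, ?_, rfl⟩
          rw [Finset.coe_insert]
          by_cases hkf : k = f
          · exact Set.mem_insert_iff.mpr (Or.inl hkf)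
          · refine Set.mem_insert_iff.mpr (Or.inr ?_)
            rw [Finset.mem_coe, Finset.mem_erase]
            exact ⟨hke, hsub (Finset.mem_erase.mpr ⟨hkf, hkC⟩)⟩
      have : U i = (c i)⁻¹ • (c i • U i) := by
        rw [smul_smul, inv_mul_cancel₀ hce, one_smul]
      rw [this, hsum']
      exact Submodule.smul_mem _ _ (Submodule.neg_mem _ (Submodule.sum_mem _ hmem))
    · apply Submodule.subset_span
      refine ⟨i, ?_, rfl⟩
      rw [Finset.coe_insert]
      exact Set.mem_insert_iff.mpr (Or.inr (by
        rw [Finset.mem_coe, Finset.mem_erase]; exact ⟨hie, hiB⟩))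

lemma exists_indep_span_eq_aux :
    ∀ (k : ℕ) (A I : Finset (Fin m)), I ⊆ A → A.card - I.card ≤ k → Indep U I →
      ∃ I', I' ⊆ A ∧ Indep U I' ∧
        Submodule.span ℝ (U '' ↑I') = Submodule.span ℝ (U '' ↑A) := by
  intro k
  induction k with
  | zero =>
    intro A I hIA hk hI
    have : I = A := Finset.eq_of_subset_of_card_le hIA (by omega)
    exact ⟨I, hIA, hI, by rw [this]⟩
  | succ k ih =>
    intro A I hIA hk hI
    by_cases hall : ∀ i ∈ A, U i ∈ Submodule.span ℝ (U '' ↑I)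
    · refine ⟨I, hIA, hI, le_antisymm ?_ ?_⟩
      · exact Submodule.span_mono (Set.image_mono (f := U) hIA)
      · exact Submodule.span_le.mpr (by rintro x ⟨i, hi, rfl⟩; exact hall i hi)
    · push_neg at hall
      obtain ⟨i, hiA, hi⟩ := hall
      have hiI : i ∉ I := fun h => hi (Submodule.subset_span ⟨i, h, rfl⟩)
      have hins : Indep U (insert i I) := by
        have h2 := (linearIndepOn_insert (f := U) (a := i) (s := (I : Set (Fin m)))
          (by exact_mod_cast hiI)).mpr ⟨hI, hi⟩
        unfold Indep
        rw [Finset.coe_insert]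
        exact h2
      have hcard : I.card < A.card := Finset.card_lt_card
        (Finset.ssubset_iff_of_subset hIA |>.mpr ⟨i, hiA, hiI⟩)
      exact ih A (insert i I) (Finset.insert_subset hiA hIA)
        (by rw [Finset.card_insert_of_notMem hiI]; omega) hins

lemma exists_indep_span_eq (A : Finset (Fin m)) :
    ∃ I, I ⊆ A ∧ Indep U I ∧
      Submodule.span ℝ (U '' ↑I) = Submodule.span ℝ (U '' ↑A) := by
  obtain ⟨I, h1, h2, h3⟩ := exists_indep_span_eq_aux U A.card A ∅ (Finset.empty_subset A)
    (by simp) (indep_empty U)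
  exact ⟨I, h1, h2, h3⟩

lemma crossing (htop : Submodule.span ℝ (Set.range U) = ⊤) (hinj : Function.Injective U)
    {A B2 : Finset (Fin m)} (hd : Disjoint A B2)
    (hnd : ¬ Disjoint (Submodule.span ℝ (U '' ↑A)) (Submodule.span ℝ (U '' ↑B2))) :
    ∃ e ∈ A, ∃ f ∈ B2, ∃ B : Finset (Fin m), IsBasisIndex U B ∧ e ∈ B ∧ f ∉ B ∧
      IsBasisIndex U (insert f (B.erase e)) := by
  obtain ⟨I₁, hI₁A, hI₁i, hI₁s⟩ := exists_indep_span_eq U A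
  obtain ⟨I₂, hI₂B, hI₂i, hI₂s⟩ := exists_indep_span_eq U B2
  have hdI : Disjoint I₁ I₂ := hd.mono hI₁A hI₂B
  have hni : ¬ Indep U (I₁ ∪ I₂) := by
    intro h
    apply hnd
    rw [← hI₁s, ← hI₂s]
    exact disjoint_span_of_indep_union U hinj hdI h
  obtain ⟨C, hCsub, hCni, ⟨c, hsupp, hsum⟩, hmin⟩ := exists_min_dep U hni
  have hCe : ∃ e, e ∈ C ∩ I₁ := by
    by_contra h
    push_neg at h
    have : C ⊆ I₂ := by
      intro x hx
      rcases Finset.mem_union.mp (hCsub hx) with h1 | h2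
      · exact absurd (Finset.mem_inter.mpr ⟨hx, h1⟩) (h x)
      · exact h2
    exact hCni (indep_mono U this hI₂i)
  have hCf : ∃ f, f ∈ C ∩ I₂ := by
    by_contra h
    push_neg at h
    have : C ⊆ I₁ := by
      intro x hx
      rcases Finset.mem_union.mp (hCsub hx) with h1 | h2
      · exact h1
      · exact absurd (Finset.mem_inter.mpr ⟨hx, h2⟩) (h x)
    exact hCni (indep_mono U this hI₁i)
  obtain ⟨e, he⟩ := hCe
  obtain ⟨f, hf⟩ := hCf
  rw [Finset.mem_inter] at he hf
  have hef : e ≠ f := by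
    intro h
    subst h
    exact (Finset.disjoint_left.mp hdI) he.2 hf.2
  obtain ⟨B, hB⟩ := exchange U htop c hsupp hsum hmin he.1 hf.1 hef
  exact ⟨e, hI₁A he.2, f, hI₂B hf.2, B, hB⟩

/-- difference vectors that lie in the vector span of the matroid polytope -/
def Good (e f : Fin m) : Prop :=
  Pi.single f (1:ℝ) - Pi.single e (1:ℝ) ∈ vectorSpan ℝ (matroidPolytope U)

lemma vertex_mem {B : Finset (Fin m)} (hB : IsBasisIndex U B) :
    (fun j => if j ∈ B then (1:ℝ) else 0) ∈ matroidPolytope U :=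
  subset_convexHull ℝ _ ⟨B, hB, rfl⟩

lemma good_refl (e : Fin m) : Good U e e := by
  unfold Good; rw [sub_self]; exact zero_mem _

lemma good_symm {e f : Fin m} (h : Good U e f) : Good U f e := by
  unfold Good at h ⊢
  have := neg_mem h
  rwa [neg_sub] at this

lemma good_trans {e f g : Fin m} (h1 : Good U e f) (h2 : Good U f g) : Good U e g := by
  unfold Good at h1 h2 ⊢
  have := add_mem h2 h1
  rwa [sub_add_sub_cancel] at this

lemma good_of_exchange {e f : Fin m} {B : Finset (Fin m)} (hB : IsBasisIndex U B)
    (heB : e ∈ B) (hfB : f ∉ B) (hB' : IsBasisIndex U (insert f (B.erase e))) :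
    Good U e f := by
  classical
  have hef : e ≠ f := fun h => hfB (h ▸ heB)
  have h1 := vertex_mem U hB
  have h2 := vertex_mem U hB'
  have key : (fun j => if j ∈ insert f (B.erase e) then (1:ℝ) else 0)
      - (fun j => if j ∈ B then (1:ℝ) else 0)
      = Pi.single f (1:ℝ) - Pi.single e (1:ℝ) := by
    funext i
    simp only [Pi.sub_apply, Pi.single_apply]
    by_cases hif : i = f
    · subst hif
      rw [if_pos (Finset.mem_insert_self _ _), if_neg hfB, if_pos rfl,
        if_neg (fun h : i = e => hef h.symm)]
    · by_cases hie : i = e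
      · subst hie
        have hmem : i ∉ insert f (B.erase i) := by simp [hif]
        rw [if_neg hmem, if_pos heB, if_neg hif, if_pos rfl]
      · rw [if_neg hif, if_neg hie, sub_zero]
        by_cases hiB : i ∈ B
        · rw [if_pos (Finset.mem_insert_of_mem (Finset.mem_erase.mpr ⟨hie, hiB⟩)),
            if_pos hiB, sub_self]
        · have hmem : i ∉ insert f (B.erase e) := by simp [hif, hiB]
          rw [if_neg hmem, if_neg hiB, sub_self]
  unfold Good
  rw [← key, show (fun j => if j ∈ insert f (B.erase e) then (1:ℝ) else 0)
      - (fun j => if j ∈ B then (1:ℝ) else 0)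
      = (fun j => if j ∈ insert f (B.erase e) then (1:ℝ) else 0)
      -ᵥ (fun j => if j ∈ B then (1:ℝ) else 0) from rfl]
  exact vsub_mem_vectorSpan ℝ h2 h1

lemma good_component (htop : Submodule.span ℝ (Set.range U) = ⊤)
    (hinj : Function.Injective U) {T : Finset (Fin m)} (hirrT : IrreducibleIdx U T)
    {e : Fin m} (he : e ∈ T) : ∀ f ∈ T, Good U e f := by
  classical
  by_contra hc
  push_neg at hc
  set A := T.filter (fun f => Good U e f) with hA
  have heA : e ∈ A := Finset.mem_filter.mpr ⟨he, good_refl U e⟩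
  have hAne : A ≠ T := by
    intro h
    obtain ⟨f, hfT, hfg⟩ := hc
    exact hfg (Finset.mem_filter.mp (h ▸ hfT)).2
  have hnd := hirrT A (Finset.filter_subset _ _) ⟨e, heA⟩ hAne
  obtain ⟨e', he', f', hf', B, hB1, hB2, hB3, hB4⟩ :=
    crossing U htop hinj (Finset.disjoint_sdiff) hnd
  have hge' : Good U e e' := (Finset.mem_filter.mp he').2
  have hgf : Good U e f' := good_trans U hge' (good_of_exchange U hB1 hB2 hB3 hB4)
  have : f' ∈ A := Finset.mem_filter.mpr ⟨(Finset.mem_sdiff.mp hf').1, hgf⟩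
  exact (Finset.mem_sdiff.mp hf').2 this

lemma indep_of_isBasisIndex {B : Finset (Fin m)} (hB : IsBasisIndex U B) : Indep U B := by
  apply linearIndependent_of_top_le_span_of_card_eq_finrank
  · rw [show Set.range (fun i : (B : Set (Fin m)) => U i) = U '' ↑B from
      (Set.image_eq_range U ↑B).symm, hB.2]
  · rw [finrank_euclideanSpace_fin]
    simpa using hB.1

section counting
variable {d : ℕ} (S : Fin d → Finset (Fin m))

lemma sum_finrank_eq (hind : iSupIndep fun j => Submodule.span ℝ (U '' ↑(S j)))
    (hspan : (⨆ j, Submodule.span ℝ (U '' ↑(S j))) = ⊤) :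
    ∑ j, finrank ℝ (Submodule.span ℝ (U '' ↑(S j))) = n := by
  classical
  have hint : DirectSum.IsInternal (fun j => Submodule.span ℝ (U '' ↑(S j))) :=
    DirectSum.isInternal_submodule_of_iSupIndep_of_iSup_eq_top hind hspan
  have h1 : finrank ℝ (DirectSum (Fin d) (fun j => ↥(Submodule.span ℝ (U '' ↑(S j)))))
      = finrank ℝ (EuclideanSpace ℝ (Fin n)) :=
    (LinearEquiv.ofBijective (DirectSum.coeLinearMap _) hint).finrank_eq
  rw [Module.finrank_directSum, finrank_euclideanSpace_fin] at h1
  exact h1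

lemma basis_inter_card
    (hdisj : ∀ j j', j ≠ j' → Disjoint (S j) (S j'))
    (hcover : ∀ i, ∃ j, i ∈ S j)
    (hsum : ∑ j, finrank ℝ (Submodule.span ℝ (U '' ↑(S j))) = n)
    {B : Finset (Fin m)} (hB : IsBasisIndex U B) (j : Fin d) :
    ((B ∩ S j).card : ℕ) = finrank ℝ (Submodule.span ℝ (U '' ↑(S j))) := by
  classical
  have hBi : Indep U B := indep_of_isBasisIndex U hB
  have hle : ∀ j', (B ∩ S j').card ≤ finrank ℝ (Submodule.span ℝ (U '' ↑(S j'))) := by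
    intro j'
    have hind : Indep U (B ∩ S j') := indep_mono U (Finset.inter_subset_left) hBi
    set V := Submodule.span ℝ (U '' ↑(S j'))
    have hmem : ∀ i : ((B ∩ S j' : Finset (Fin m)) : Set (Fin m)), U i ∈ V := by
      rintro ⟨i, hi⟩
      exact Submodule.subset_span ⟨i, (Finset.mem_inter.mp hi).2, rfl⟩
    set g : ((B ∩ S j' : Finset (Fin m)) : Set (Fin m)) → V := fun i => ⟨U i, hmem i⟩
    have hgind : LinearIndependent ℝ g := by
      apply LinearIndependent.of_comp V.subtype
      exact hind
    have hfc := hgind.fintype_card_le_finrank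
    have h3 : (B ∩ S j') = Finset.filter (fun x => x ∈ B) (S j') := by
      rw [Finset.filter_mem_eq_inter, Finset.inter_comm]
    rw [h3]
    simpa using hfc
  have hcardB : B.card = n := hB.1
  have hpart : B = Finset.univ.biUnion (fun j' => B ∩ S j') := by
    ext i
    simp only [Finset.mem_biUnion, Finset.mem_univ, true_and, Finset.mem_inter]
    constructor
    · intro hi
      obtain ⟨j', hj'⟩ := hcover i
      exact ⟨j', hi, hj'⟩
    · rintro ⟨j', hi, _⟩
      exact hi
  have hsumB : ∑ j', (B ∩ S j').card = n := by
    rw [← hcardB]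
    conv_rhs => rw [hpart]
    rw [Finset.card_biUnion]
    intro j1 _ j2 _ hj
    exact (hdisj j1 j2 hj).mono Finset.inter_subset_right Finset.inter_subset_right
  have := (Finset.sum_eq_sum_iff_of_le (fun j' _ => hle j')).mp (by rw [hsumB, hsum])
  exact this j (Finset.mem_univ j)

noncomputable def Phi : (Fin m → ℝ) →ₗ[ℝ] (Fin d → ℝ) :=
  LinearMap.pi (fun j => ∑ i ∈ S j, LinearMap.proj i)

lemma Phi_apply (x : Fin m → ℝ) (j : Fin d) : Phi S x j = ∑ i ∈ S j, x i := by
  simp [Phi]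

lemma phi_surjective (hne : ∀ j, (S j).Nonempty)
    (hdisj : ∀ j j', j ≠ j' → Disjoint (S j) (S j')) :
    Function.Surjective (Phi (m := m) S) := by
  classical
  intro y
  refine ⟨∑ j, Pi.single ((hne j).choose) (y j), ?_⟩
  funext j'
  rw [Phi_apply]
  have h1 : ∀ i ∈ S j', (∑ j, (Pi.single ((hne j).choose) (y j) : Fin m → ℝ)) i
      = ∑ j, (if i = (hne j).choose then y j else 0) := by
    intro i _
    rw [Finset.sum_apply]
    exact Finset.sum_congr rfl (fun j _ => Pi.single_apply _ _ _)
  rw [Finset.sum_congr rfl h1, Finset.sum_comm]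
  have h2 : ∀ j, ∑ i ∈ S j', (if i = (hne j).choose then y j else 0)
      = if (hne j).choose ∈ S j' then y j else 0 := by
    intro j
    exact Finset.sum_ite_eq' (S j') ((hne j).choose) (fun _ => y j)
  rw [Finset.sum_congr rfl (fun j _ => h2 j)]
  rw [Finset.sum_eq_single j']
  · rw [if_pos (hne j').choose_spec]
  · intro j _ hj
    rw [if_neg]
    intro hmem
    exact (Finset.disjoint_left.mp (hdisj j j' hj)) (hne j).choose_spec hmem
  · intro h
    exact absurd (Finset.mem_univ j') h

lemma finrank_ker_phi (hne : ∀ j, (S j).Nonempty)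
    (hdisj : ∀ j j', j ≠ j' → Disjoint (S j) (S j')) :
    finrank ℝ (LinearMap.ker (Phi (m := m) S)) = m - d := by
  have h1 := LinearMap.finrank_range_add_finrank_ker (Phi (m := m) S)
  rw [LinearMap.range_eq_top.mpr (phi_surjective S hne hdisj), finrank_top,
    finrank_fintype_fun_eq_card, finrank_fintype_fun_eq_card,
    Fintype.card_fin, Fintype.card_fin] at h1
  omega

end counting
section main
variable {d : ℕ} (S : Fin d → Finset (Fin m))

lemma upper_bound
    (hdisj : ∀ j j', j ≠ j' → Disjoint (S j) (S j'))
    (hcover : ∀ i, ∃ j, i ∈ S j)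
    (hsum : ∑ j, finrank ℝ (Submodule.span ℝ (U '' ↑(S j))) = n) :
    vectorSpan ℝ (matroidPolytope U) ≤ LinearMap.ker (Phi (m := m) S) := by
  classical
  set c : Fin d → ℝ := fun j => ((finrank ℝ (Submodule.span ℝ (U '' ↑(S j))) : ℕ) : ℝ)
    with hc
  have hvert : {x : Fin m → ℝ | ∃ I : Finset (Fin m), IsBasisIndex U I ∧
      x = fun j => if j ∈ I then (1 : ℝ) else 0} ⊆ {x | Phi (m := m) S x = c} := by
    rintro x ⟨B, hB, rfl⟩
    show Phi (m := m) S _ = c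
    funext j
    rw [Phi_apply]
    have : ∑ i ∈ S j, (if i ∈ B then (1:ℝ) else 0) = ((S j).filter (· ∈ B)).card := by
      rw [Finset.sum_boole]
    rw [this, hc]
    have h2 : (S j).filter (· ∈ B) = B ∩ S j := by
      rw [Finset.filter_mem_eq_inter, Finset.inter_comm]
    rw [h2, basis_inter_card U S hdisj hcover hsum hB j]
  have hconv : Convex ℝ {x : Fin m → ℝ | Phi (m := m) S x = c} := by
    intro x hx y hy a b ha hb hab
    have hx' : Phi (m := m) S x = c := hx
    have hy' : Phi (m := m) S y = c := hy
    show Phi (m := m) S _ = c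
    rw [map_add, LinearMap.map_smul, LinearMap.map_smul, hx', hy',
      ← add_smul, hab, one_smul]
  have hsub : matroidPolytope U ⊆ {x | Phi (m := m) S x = c} :=
    convexHull_min hvert hconv
  rw [vectorSpan_def]
  apply Submodule.span_le.mpr
  rintro u hu
  obtain ⟨x, hx, y, hy, rfl⟩ := Set.mem_vsub.mp hu
  rw [SetLike.mem_coe, LinearMap.mem_ker, vsub_eq_sub, map_sub, hsub hx, hsub hy, sub_self]

lemma lower_bound
    (hne : ∀ j, (S j).Nonempty)
    (hdisj : ∀ j j', j ≠ j' → Disjoint (S j) (S j'))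
    (hcover : ∀ i, ∃ j, i ∈ S j)
    (hgood : ∀ j, ∀ e ∈ S j, ∀ f ∈ S j, Good U e f) :
    LinearMap.ker (Phi (m := m) S) ≤ vectorSpan ℝ (matroidPolytope U) := by
  classical
  intro w hw
  choose J hJ using hcover
  have hrS : ∀ j, (hne j).choose ∈ S j := fun j => (hne j).choose_spec
  set r : Fin d → Fin m := fun j => (hne j).choose with hr
  have hkey : w = ∑ i, w i • ((Pi.single i (1:ℝ) : Fin m → ℝ)
      - (Pi.single (r (J i)) (1:ℝ) : Fin m → ℝ)) := by
    have h1 : ∑ i, w i • (Pi.single i (1:ℝ) : Fin m → ℝ) = w := by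
      have hs : ∀ i, w i • (Pi.single i (1:ℝ) : Fin m → ℝ) = Pi.single i (w i) := by
        intro i
        funext k
        by_cases hk : k = i
        · subst hk; simp [Pi.single_apply]
        · simp [Pi.single_apply, hk]
      simp_rw [hs]
      exact Finset.univ_sum_single w
    have h2 : ∑ i, w i • (Pi.single (r (J i)) (1:ℝ) : Fin m → ℝ) = 0 := by
      have huniv : (Finset.univ : Finset (Fin m)) = Finset.univ.biUnion (fun j => S j) :=
        Finset.ext fun i => ⟨fun _ => Finset.mem_biUnion.mpr ⟨J i, Finset.mem_univ _, hJ i⟩,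
          fun _ => Finset.mem_univ i⟩
      rw [huniv, Finset.sum_biUnion (fun j1 _ j2 _ hj => hdisj j1 j2 hj)]
      apply Finset.sum_eq_zero
      intro j _
      have hcong : ∀ i ∈ S j, w i • (Pi.single (r (J i)) (1:ℝ) : Fin m → ℝ)
          = w i • (Pi.single (r j) (1:ℝ) : Fin m → ℝ) := by
        intro i hi
        have hJi : J i = j := by
          by_contra h
          exact (Finset.disjoint_left.mp (hdisj _ _ h)) (hJ i) hi
        rw [hJi]
      rw [Finset.sum_congr rfl hcong, ← Finset.sum_smul]
      have hzero : ∑ i ∈ S j, w i = 0 := by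
        have := congrFun (LinearMap.mem_ker.mp hw) j
        rwa [Phi_apply] at this
      rw [hzero, zero_smul]
    simp_rw [smul_sub]
    rw [Finset.sum_sub_distrib, h1, h2, sub_zero]
  rw [hkey]
  exact Submodule.sum_mem _ (fun i _ => Submodule.smul_mem _ _
    (hgood (J i) (r (J i)) (hrS (J i)) i (hJ i)))

lemma vectorSpan_smul_set {a : ℝ} (ha : a ≠ 0) (s : Set (Fin m → ℝ)) :
    vectorSpan ℝ (a • s) = vectorSpan ℝ s := by
  have key : ∀ (b : ℝ) (t : Set (Fin m → ℝ)), vectorSpan ℝ (b • t) ≤ vectorSpan ℝ t := by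
    intro b t
    rw [vectorSpan_def, vectorSpan_def]
    apply Submodule.span_le.mpr
    rintro u hu
    obtain ⟨p, hp, q, hq, rfl⟩ := Set.mem_vsub.mp hu
    obtain ⟨x, hx, rfl⟩ := hp
    obtain ⟨y, hy, rfl⟩ := hq
    have : (b • x) -ᵥ (b • y) = b • (x -ᵥ y) := by
      rw [vsub_eq_sub, vsub_eq_sub, smul_sub]
    rw [this]
    exact Submodule.smul_mem _ _ (Submodule.subset_span (Set.vsub_mem_vsub hx hy))
  apply le_antisymm (key a s)
  have h2 := key a⁻¹ (a • s)
  rwa [inv_smul_smul₀ ha] at h2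

end main

end Stmt18

/-- if `U = S₁ ∪ ⋯ ∪ S_d` is the partition of the columns of `U` into
irreducible sets (whose spans decompose `ℝⁿ` as a direct sum), then the dimension of
`P_scc(U) = (1/n)·P(M_U)` equals `m - d`. -/
theorem stmt_18 (n m d : ℕ) (hn : 0 < n) (U : Fin m → EuclideanSpace ℝ (Fin n))
    (hunit : ∀ i, ‖U i‖ = 1) (hinj : Function.Injective U) (hpos : PosSpanning U)
    (S : Fin d → Finset (Fin m))
    (hne : ∀ j, (S j).Nonempty)
    (hdisj : ∀ j j', j ≠ j' → Disjoint (S j) (S j'))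
    (hcover : ∀ i, ∃ j, i ∈ S j)
    (hirr : ∀ j, IrreducibleIdx U (S j))
    (hind : iSupIndep fun j => Submodule.span ℝ (U '' ↑(S j)))
    (hspan : (⨆ j, Submodule.span ℝ (U '' ↑(S j))) = ⊤) :
    finrank ℝ (vectorSpan ℝ ((n : ℝ)⁻¹ • matroidPolytope U)) = m - d := by
  have htop : Submodule.span ℝ (Set.range U) = ⊤ := by
    rw [eq_top_iff]
    intro x _
    obtain ⟨c, _, hx⟩ := hpos x
    rw [hx]
    exact Submodule.sum_mem _ fun i _ => Submodule.smul_mem _ _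
      (Submodule.subset_span ⟨i, rfl⟩)
  have hgood : ∀ j, ∀ e ∈ S j, ∀ f ∈ S j, Stmt18.Good U e f := by
    intro j e he f hf
    exact Stmt18.good_component U htop hinj (hirr j) he f hf
  have hsum := Stmt18.sum_finrank_eq U S hind hspan
  have hupper := Stmt18.upper_bound U S hdisj hcover hsum
  have hlower := Stmt18.lower_bound U S hne hdisj hcover hgood
  have hvs : vectorSpan ℝ (matroidPolytope U) = LinearMap.ker (Stmt18.Phi (m := m) S) :=
    le_antisymm hupper hlower
  have ha : ((n : ℝ))⁻¹ ≠ 0 := by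
    apply inv_ne_zero
    exact_mod_cast hn.ne'
  rw [Stmt18.vectorSpan_smul_set ha, hvs, Stmt18.finrank_ker_phi S hne hdisj]
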